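/- For every integer q ≥ 2, every real p ∈ (0,1), and every real ε̄ > 0, there exists a positive integer n₁ such that for every positive integer n, ε(q,n,p) ≤ ε̄ if and only if n ≥ n₁. -/

import Mathlib

noncomputable def alphaC : ℝ := -3 - 9 * Real.log (2 / 3)

noncomputable def Delta1 (d : ℕ) (δ q : ℝ) : ℝ :=
  Real.sqrt d * (q - 1) + Real.sqrt (2 * Real.sqrt d * (q - 1) * Real.log (2 / δ)) +
    (4 / 3) * Real.log (2 / δ)

noncomputable def Delta2 (d : ℕ) (δ q : ℝ) : ℝ :=
  (q - 1) + Real.sqrt (Delta1 d δ q + Real.sqrt (2 * Real.sqrt d * (q - 1) * Real.log (2 / δ)))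

def DeltaInf (q : ℝ) : ℝ := q + 1

noncomputable def S1 (n p : ℝ) : ℝ :=
  ((3 * p ^ 2 - 3 * p + 1) / (n * (n + 1) * (n + 2) * p ^ 2 * (1 - p) ^ 2)) *
    (3 * n + 2 + 2 / (p * (1 - p)))

noncomputable def S2 (d : ℕ) (δ n p : ℝ) : ℝ :=
  (Real.sqrt (2 * n * p * (1 - p) * Real.log (20 * d / δ)) + 1 +
    (2 / 3) * max p (1 - p) * Real.log (20 * d / δ)) ^ 2

/-- The privacy budget estimate ε(q, n, p). -/
noncomputable def eps (d : ℕ) (δ q n p : ℝ) : ℝ :=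
  Delta2 d δ q * Real.sqrt (2 * Real.log (1.25 / δ)) / Real.sqrt (n * p * (1 - p)) +
  alphaC * Delta1 d δ q * (n * p * (1 - p) + 1) * (p ^ 2 + (1 - p) ^ 2) /
    (n ^ 2 * p ^ 2 * (1 - p) ^ 2 * (1 - δ / 10)) +
  (Delta2 d δ q / Real.sqrt (1 - δ / 10)) * Real.sqrt (2 * S1 n p * Real.log (10 / δ)) +
  (2 / 3) * alphaC * S2 d δ n p * (p ^ 2 + (1 - p) ^ 2) * Real.log (10 / δ) * DeltaInf q /
    (n ^ 2 * p ^ 2 * (1 - p) ^ 2) +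
  2 * Real.log (1.25 / δ) * DeltaInf q / (n * p * (1 - p))

open Filter Real

section AuxEps

lemma sqrt_tendsto_atTop' : Tendsto Real.sqrt atTop atTop := by
  apply tendsto_atTop_atTop.2
  intro b
  refine ⟨(max b 0) ^ 2, fun a ha => ?_⟩
  calc b ≤ max b 0 := le_max_left _ _
    _ = Real.sqrt ((max b 0) ^ 2) := (Real.sqrt_sq (le_max_right _ _)).symm
    _ ≤ Real.sqrt a := Real.sqrt_le_sqrt ha

noncomputable def Fnice (A1 A2 A3 A4 B1 B2 A5 A6 A7 x : ℝ) : ℝ :=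
  A1 / Real.sqrt x + A2 / x + A3 / x ^ 2 +
    A4 * Real.sqrt (B1 / ((x + 1) * (x + 2)) + B2 / (x * (x + 1) * (x + 2))) +
    A5 * (A6 / Real.sqrt x + A7 / x) ^ 2

lemma Fnice_anti (A1 A2 A3 A4 B1 B2 A5 A6 A7 : ℝ)
    (h1 : 0 ≤ A1) (h2 : 0 ≤ A2) (h3 : 0 ≤ A3) (h4 : 0 ≤ A4) (hB1 : 0 ≤ B1) (hB2 : 0 ≤ B2)
    (h5 : 0 ≤ A5) (h6 : 0 ≤ A6) (h7 : 0 ≤ A7)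
    {x y : ℝ} (hx : 0 < x) (hxy : x ≤ y) :
    Fnice A1 A2 A3 A4 B1 B2 A5 A6 A7 y ≤ Fnice A1 A2 A3 A4 B1 B2 A5 A6 A7 x := by
  have hy : 0 < y := hx.trans_le hxy
  have hsx : 0 < Real.sqrt x := Real.sqrt_pos.2 hx
  have hsy : 0 < Real.sqrt y := Real.sqrt_pos.2 hy
  unfold Fnice
  gcongr

lemma Fnice_tendsto (A1 A2 A3 A4 B1 B2 A5 A6 A7 : ℝ) :
    Tendsto (Fnice A1 A2 A3 A4 B1 B2 A5 A6 A7) atTop (nhds 0) := by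
  have hx : Tendsto (fun x : ℝ => x) atTop atTop := tendsto_id
  have hx1 : Tendsto (fun x : ℝ => x + 1) atTop atTop := tendsto_atTop_add_const_right _ 1 hx
  have hx2 : Tendsto (fun x : ℝ => x + 2) atTop atTop := tendsto_atTop_add_const_right _ 2 hx
  have hsq : Tendsto (fun x : ℝ => Real.sqrt x) atTop atTop := sqrt_tendsto_atTop'
  have t1 : Tendsto (fun x : ℝ => A1 / Real.sqrt x) atTop (nhds 0) :=
    tendsto_const_nhds.div_atTop hsq
  have t2 : Tendsto (fun x : ℝ => A2 / x) atTop (nhds 0) :=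
    tendsto_const_nhds.div_atTop hx
  have t3 : Tendsto (fun x : ℝ => A3 / x ^ 2) atTop (nhds 0) :=
    tendsto_const_nhds.div_atTop (tendsto_pow_atTop two_ne_zero)
  have tin : Tendsto (fun x : ℝ => B1 / ((x + 1) * (x + 2)) + B2 / (x * (x + 1) * (x + 2)))
      atTop (nhds 0) := by
    have ha : Tendsto (fun x : ℝ => B1 / ((x + 1) * (x + 2))) atTop (nhds 0) :=
      tendsto_const_nhds.div_atTop (hx1.atTop_mul_atTop₀ hx2)
    have hb : Tendsto (fun x : ℝ => B2 / (x * (x + 1) * (x + 2))) atTop (nhds 0) :=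
      tendsto_const_nhds.div_atTop ((hx.atTop_mul_atTop₀ hx1).atTop_mul_atTop₀ hx2)
    simpa using ha.add hb
  have t4 : Tendsto (fun x : ℝ =>
      A4 * Real.sqrt (B1 / ((x + 1) * (x + 2)) + B2 / (x * (x + 1) * (x + 2)))) atTop (nhds 0) := by
    have hc : Tendsto Real.sqrt (nhds 0) (nhds 0) := by
      simpa using Real.continuous_sqrt.tendsto 0
    simpa using (hc.comp tin).const_mul A4
  have t5 : Tendsto (fun x : ℝ => A5 * (A6 / Real.sqrt x + A7 / x) ^ 2) atTop (nhds 0) := by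
    have g : Tendsto (fun x : ℝ => A6 / Real.sqrt x + A7 / x) atTop (nhds 0) := by
      simpa using (tendsto_const_nhds.div_atTop hsq).add (tendsto_const_nhds.div_atTop hx)
    simpa using ((g.pow 2).const_mul A5)
  have := ((((t1.add t2).add t3).add t4).add t5)
  simp only [add_zero] at this
  exact this

lemma threshold_of_anti (f : ℕ → ℝ) (hanti : ∀ m n : ℕ, 0 < m → m ≤ n → f n ≤ f m)
    (hlim : Tendsto f atTop (nhds 0)) (ebar : ℝ) (hebar : 0 < ebar) :
    ∃ n₁ : ℕ, 0 < n₁ ∧ ∀ n : ℕ, 0 < n → (f n ≤ ebar ↔ n₁ ≤ n) := by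
  have hev : ∀ᶠ n : ℕ in atTop, f n < ebar := by
    have := hlim (Iio_mem_nhds hebar)
    simpa [Set.preimage, Set.mem_Iio] using this
  obtain ⟨N, hN⟩ := hev.exists_forall_of_atTop
  set S : Set ℕ := {n | 0 < n ∧ f n ≤ ebar} with hS
  have hne : S.Nonempty := ⟨max N 1, Nat.lt_of_lt_of_le Nat.zero_lt_one (le_max_right _ _),
    (hN _ (le_max_left _ _)).le⟩
  refine ⟨sInf S, (Nat.sInf_mem hne).1, fun n hn => ⟨fun h => Nat.sInf_le ⟨hn, h⟩, fun h => ?_⟩⟩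
  exact le_trans (hanti _ _ (Nat.sInf_mem hne).1 h) (Nat.sInf_mem hne).2

lemma E25_abs (a D1 P2 L1 Q u p pp s : ℝ) (hu : u ≠ 0) (hp : p ≠ 0) (hpp : pp ≠ 0)
    (hs : s ≠ 0) :
    a * D1 * (u ^ 2 * p * pp + 1) * P2 / ((u ^ 2) ^ 2 * p ^ 2 * pp ^ 2 * s) +
      2 * L1 * Q / (u ^ 2 * p * pp)
    = (a * D1 * P2 / (p * pp * s) + 2 * L1 * Q / (p * pp)) / u ^ 2 +
      a * D1 * P2 / (p ^ 2 * pp ^ 2 * s) / (u ^ 2) ^ 2 := by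
  field_simp
  ring

lemma E4_abs (a A6 A7 P2 L2 Q u p pp : ℝ) (hu : u ≠ 0) (hp : p ≠ 0) (hpp : pp ≠ 0) :
    2 / 3 * a * (A6 * u + A7) ^ 2 * P2 * L2 * Q / ((u ^ 2) ^ 2 * p ^ 2 * pp ^ 2)
    = 2 / 3 * a * P2 * L2 * Q / (p ^ 2 * pp ^ 2) * (A6 / u + A7 / u ^ 2) ^ 2 := by
  field_simp

end AuxEps

set_option maxHeartbeats 1000000 in
/-- for any budget upper bound there is a threshold trial number n₁ such that
the privacy budget estimate is at most the bound iff n ≥ n₁. -/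
theorem eps_threshold (d : ℕ) (hd : 1 ≤ d) (δ : ℝ) (hδ : δ ∈ Set.Ioo (0 : ℝ) 1)
    (q : ℤ) (hq : 2 ≤ q) (p : ℝ) (hp : p ∈ Set.Ioo (0 : ℝ) 1)
    (ebar : ℝ) (hebar : 0 < ebar) :
    ∃ n₁ : ℕ, 0 < n₁ ∧ ∀ n : ℕ, 0 < n → (eps d δ (q : ℝ) (n : ℝ) p ≤ ebar ↔ n₁ ≤ n) := by
  obtain ⟨hp0, hp1⟩ := hp
  obtain ⟨hδ0, hδ1⟩ := hδ
  have hc : 0 < p * (1 - p) := mul_pos hp0 (by linarith)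
  have hq' : (2 : ℝ) ≤ (q : ℝ) := by exact_mod_cast hq
  have hd' : (1 : ℝ) ≤ (d : ℝ) := by exact_mod_cast hd
  have hL1 : 0 < Real.log (1.25 / δ) := Real.log_pos (by rw [lt_div_iff₀ hδ0]; linarith)
  have hL2 : 0 < Real.log (10 / δ) := Real.log_pos (by rw [lt_div_iff₀ hδ0]; linarith)
  have hL3 : 0 < Real.log (20 * (d : ℝ) / δ) :=
    Real.log_pos (by rw [lt_div_iff₀ hδ0]; nlinarith)
  have hLδ : 0 < Real.log (2 / δ) := Real.log_pos (by rw [lt_div_iff₀ hδ0]; linarith)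
  have hs : 0 < 1 - δ / 10 := by linarith
  have hss : 0 < Real.sqrt (1 - δ / 10) := Real.sqrt_pos.2 hs
  have hα : 0 ≤ alphaC := by
    have h := Real.add_one_le_exp (Real.log (2 / 3 : ℝ))
    rw [Real.exp_log (by norm_num : (0:ℝ) < 2/3)] at h
    unfold alphaC; linarith
  have hD1 : 0 ≤ Delta1 d δ (q : ℝ) := by
    unfold Delta1
    have h1 := Real.sqrt_nonneg (d : ℝ)
    have h2 := Real.sqrt_nonneg (2 * Real.sqrt (d:ℝ) * ((q:ℝ) - 1) * Real.log (2 / δ))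
    nlinarith
  have hD2 : 0 ≤ Delta2 d δ (q : ℝ) := by
    unfold Delta2
    have h2 := Real.sqrt_nonneg (Delta1 d δ (q:ℝ) +
      Real.sqrt (2 * Real.sqrt (d:ℝ) * ((q:ℝ) - 1) * Real.log (2 / δ)))
    linarith
  have hk : 0 ≤ 3 * p ^ 2 - 3 * p + 1 := by nlinarith [sq_nonneg (p - 1/2)]
  have hqd : 0 ≤ (q : ℝ) + 1 := by linarith
  have hP2 : 0 ≤ p ^ 2 + (1 - p) ^ 2 := by positivity
  have hmax : 0 ≤ max p (1 - p) := le_trans hp0.le (le_max_left _ _)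
  -- the constants
  set A1 : ℝ := Delta2 d δ (q:ℝ) * Real.sqrt (2 * Real.log (1.25 / δ)) / Real.sqrt (p * (1 - p))
    with hA1def
  set A2 : ℝ := alphaC * Delta1 d δ (q:ℝ) * (p ^ 2 + (1 - p) ^ 2) /
      (p * (1 - p) * (1 - δ / 10)) + 2 * Real.log (1.25 / δ) * ((q:ℝ) + 1) / (p * (1 - p))
    with hA2def
  set A3 : ℝ := alphaC * Delta1 d δ (q:ℝ) * (p ^ 2 + (1 - p) ^ 2) /
      (p ^ 2 * (1 - p) ^ 2 * (1 - δ / 10)) with hA3def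
  set A4 : ℝ := Delta2 d δ (q:ℝ) / Real.sqrt (1 - δ / 10) with hA4def
  set B1 : ℝ := 6 * Real.log (10 / δ) * (3 * p ^ 2 - 3 * p + 1) / (p ^ 2 * (1 - p) ^ 2)
    with hB1def
  set B2 : ℝ := 2 * Real.log (10 / δ) * (3 * p ^ 2 - 3 * p + 1) * (2 + 2 / (p * (1 - p))) /
      (p ^ 2 * (1 - p) ^ 2) with hB2def
  set A5 : ℝ := (2 / 3) * alphaC * (p ^ 2 + (1 - p) ^ 2) * Real.log (10 / δ) * ((q:ℝ) + 1) /
      (p ^ 2 * (1 - p) ^ 2) with hA5def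
  set A6 : ℝ := Real.sqrt (2 * p * (1 - p) * Real.log (20 * (d:ℝ) / δ)) with hA6def
  set A7 : ℝ := 1 + (2 / 3) * max p (1 - p) * Real.log (20 * (d:ℝ) / δ) with hA7def
  have hA1 : 0 ≤ A1 := div_nonneg (mul_nonneg hD2 (Real.sqrt_nonneg _)) (Real.sqrt_nonneg _)
  have hA2 : 0 ≤ A2 :=
    add_nonneg
      (div_nonneg (mul_nonneg (mul_nonneg hα hD1) hP2)
        (mul_nonneg hc.le hs.le))
      (div_nonneg (mul_nonneg (mul_nonneg (by norm_num) hL1.le) hqd) hc.le)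
  have hA3 : 0 ≤ A3 := div_nonneg (mul_nonneg (mul_nonneg hα hD1) hP2) (by positivity)
  have hA4 : 0 ≤ A4 := div_nonneg hD2 (Real.sqrt_nonneg _)
  have hB1 : 0 ≤ B1 :=
    div_nonneg (mul_nonneg (mul_nonneg (by norm_num) hL2.le) hk) (by positivity)
  have hB2 : 0 ≤ B2 :=
    div_nonneg (mul_nonneg (mul_nonneg (mul_nonneg (by norm_num) hL2.le) hk)
      (add_nonneg (by norm_num) (div_nonneg (by norm_num) hc.le))) (by positivity)
  have hA5 : 0 ≤ A5 :=
    div_nonneg (mul_nonneg (mul_nonneg (mul_nonneg (mul_nonneg (by norm_num) hα) hP2) hL2.le)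
      hqd) (by positivity)
  have hA6 : 0 ≤ A6 := Real.sqrt_nonneg _
  have hA7 : 0 ≤ A7 :=
    add_nonneg (by norm_num) (mul_nonneg (mul_nonneg (by norm_num) hmax) hL3.le)
  -- the key identity
  have heq : ∀ x : ℝ, 0 < x → eps d δ (q:ℝ) x p = Fnice A1 A2 A3 A4 B1 B2 A5 A6 A7 x := by
    intro x hx
    obtain ⟨u, hu, rfl⟩ : ∃ u : ℝ, 0 < u ∧ u ^ 2 = x :=
      ⟨Real.sqrt x, Real.sqrt_pos.2 hx, Real.sq_sqrt hx.le⟩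
    have hune : u ≠ 0 := hu.ne'
    have hpne : p ≠ 0 := hp0.ne'
    have h1pne : (1 : ℝ) - p ≠ 0 := by linarith
    have hsne : (1 : ℝ) - δ / 10 ≠ 0 := hs.ne'
    have hssne : Real.sqrt (1 - δ / 10) ≠ 0 := hss.ne'
    have hcs : Real.sqrt (p * (1 - p)) ≠ 0 := (Real.sqrt_pos.2 hc).ne'
    have e1 : Real.sqrt (u ^ 2 * p * (1 - p)) = Real.sqrt (p * (1 - p)) * u := by
      rw [show u ^ 2 * p * (1 - p) = (p * (1 - p)) * u ^ 2 by ring, Real.sqrt_mul hc.le,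
        Real.sqrt_sq hu.le]
    have e4 : Real.sqrt (2 * u ^ 2 * p * (1 - p) * Real.log (20 * (d:ℝ) / δ)) = A6 * u := by
      rw [show 2 * u ^ 2 * p * (1 - p) * Real.log (20 * (d:ℝ) / δ)
          = (2 * p * (1 - p) * Real.log (20 * (d:ℝ) / δ)) * u ^ 2 by ring,
        Real.sqrt_mul (by nlinarith [hL3.le, hp0.le, hp1.le] :
          (0:ℝ) ≤ 2 * p * (1 - p) * Real.log (20 * (d:ℝ) / δ)),
        Real.sqrt_sq hu.le, hA6def]
    have e3 : 2 * S1 (u ^ 2) p * Real.log (10 / δ)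
        = B1 / ((u ^ 2 + 1) * (u ^ 2 + 2)) + B2 / (u ^ 2 * (u ^ 2 + 1) * (u ^ 2 + 2)) := by
      have h1 : (u:ℝ) ^ 2 + 1 ≠ 0 := by positivity
      have h2 : (u:ℝ) ^ 2 + 2 ≠ 0 := by positivity
      rw [S1, hB1def, hB2def]
      field_simp
      ring
    rw [eps, S2, e1, e4, e3, DeltaInf, Fnice, Real.sqrt_sq hu.le, ← hA4def]
    have E1 : Delta2 d δ (q:ℝ) * Real.sqrt (2 * Real.log (1.25 / δ)) /
        (Real.sqrt (p * (1 - p)) * u) = A1 / u := (div_div _ _ _).symm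
    have E25 : alphaC * Delta1 d δ (q:ℝ) * (u ^ 2 * p * (1 - p) + 1) * (p ^ 2 + (1 - p) ^ 2) /
          ((u ^ 2) ^ 2 * p ^ 2 * (1 - p) ^ 2 * (1 - δ / 10)) +
          2 * Real.log (1.25 / δ) * ((q:ℝ) + 1) / (u ^ 2 * p * (1 - p))
        = A2 / u ^ 2 + A3 / (u ^ 2) ^ 2 := by
      rw [hA2def, hA3def]
      exact E25_abs _ _ _ _ _ _ _ _ _ hune hpne h1pne hsne
    have E4 : 2 / 3 * alphaC *
          (A6 * u + 1 + 2 / 3 * max p (1 - p) * Real.log (20 * (d:ℝ) / δ)) ^ 2 *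
          (p ^ 2 + (1 - p) ^ 2) * Real.log (10 / δ) * ((q:ℝ) + 1) /
          ((u ^ 2) ^ 2 * p ^ 2 * (1 - p) ^ 2)
        = A5 * (A6 / u + A7 / u ^ 2) ^ 2 := by
      rw [show A6 * u + 1 + 2 / 3 * max p (1 - p) * Real.log (20 * (d:ℝ) / δ) = A6 * u + A7 by
        rw [hA7def]; ring, hA5def]
      exact E4_abs _ _ _ _ _ _ _ _ _ hune hpne h1pne
    linarith [E1, E25, E4]
  -- conclude
  have hcast : ∀ n : ℕ, 0 < n → (0 : ℝ) < (n : ℝ) := fun n hn => by exact_mod_cast hn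
  apply threshold_of_anti
  · intro m n hm hmn
    rw [heq _ (hcast m hm), heq _ (hcast n (lt_of_lt_of_le hm hmn))]
    exact Fnice_anti _ _ _ _ _ _ _ _ _ hA1 hA2 hA3 hA4 hB1 hB2 hA5 hA6 hA7
      (hcast m hm) (by exact_mod_cast hmn)
  · have h0 : Tendsto (fun n : ℕ => Fnice A1 A2 A3 A4 B1 B2 A5 A6 A7 (n : ℝ))
        atTop (nhds 0) :=
      (Fnice_tendsto A1 A2 A3 A4 B1 B2 A5 A6 A7).comp tendsto_natCast_atTop_atTop
    apply h0.congr'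
    filter_upwards [eventually_gt_atTop 0] with n hn
    exact (heq _ (hcast n hn)).symm
  · exact hebar
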